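/- Symmetric overestimation bound: if ε(y,t) = Δζ̂(y,t) − Δζ(y,t) ≥ 0 for all y ∈ [0,1], t ∈ [0,T], then along any vehicle course, ε(C_j) = 0 before the first recharge event and 0 ≤ ε(y(s_{σ(j)}^s), t_{σ(j)}) ≤ ε(C_j) ≤ Σ_{i : s_i^e ⪯ C_j} ε(y(s_i^s), t_i) for all later elements C_j. -/
import Mathlib


/-- Symmetric overestimation bound: if ε(y,t) = Δζ̂(y,t) − Δζ(y,t) ≥ 0
everywhere, then along any vehicle course ε(C_j) = 0 before the first recharge event and
0 ≤ ε(y(s_i^s), t_i) ≤ ε(C_j) ≤ Σ_{i' : s_{i'}^e ⪯ C_j} ε(y(s_{i'}^s), t_{i'}) for all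
later elements C_j, where i is the recharge event immediately preceding C_j's block. -/
theorem error_propagation_overestimate
    (n : ℕ) (chg : ℕ → Bool) (t e : ℕ → ℝ) (T : ℝ) (hT : 0 < T)
    (Δ Δ' : ℝ → ℝ → ℝ)  -- exact and approximate charge increment functions Δζ, Δζ̂
    (he : ∀ j, 0 ≤ e j) (ht : ∀ j, t j ∈ Set.Icc 0 T)
    (y yh : ℕ → ℝ)       -- exact and approximate charge propagation along the course
    (hy0 : y 0 = 1) (hyh0 : yh 0 = 1)
    (hystep : ∀ j < n,
      (chg j = true → y (j + 1) = y j + Δ (y j) (t j)) ∧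
      (chg j = false → y (j + 1) = y j - e j))
    (hyhstep : ∀ j < n,
      (chg j = true → yh (j + 1) = yh j + Δ' (yh j) (t j)) ∧
      (chg j = false → yh (j + 1) = yh j - e j))
    (hrange : ∀ j ≤ n, y j ∈ Set.Icc (0:ℝ) 1 ∧ yh j ∈ Set.Icc (0:ℝ) 1)
    (hΔanti : ∀ t' ∈ Set.Icc (0:ℝ) T, AntitoneOn (fun z => Δ z t') (Set.Icc 0 1))
    (hΔ'anti : ∀ t' ∈ Set.Icc (0:ℝ) T, AntitoneOn (fun z => Δ' z t') (Set.Icc 0 1))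
    (hmonoΔ : ∀ t' ∈ Set.Icc (0:ℝ) T, MonotoneOn (fun z => z + Δ z t') (Set.Icc 0 1))
    (hmonoΔ' : ∀ t' ∈ Set.Icc (0:ℝ) T, MonotoneOn (fun z => z + Δ' z t') (Set.Icc 0 1))
    (heps : ∀ z ∈ Set.Icc (0:ℝ) 1, ∀ t' ∈ Set.Icc (0:ℝ) T, 0 ≤ Δ' z t' - Δ z t') :
    (∀ j ≤ n, (∀ i < j, chg i = false) → yh j - y j = 0) ∧
    (∀ j ≤ n, ∀ i < j, chg i = true → (∀ i', i < i' → i' < j → chg i' = false) →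
      0 ≤ Δ' (y i) (t i) - Δ (y i) (t i) ∧
      Δ' (y i) (t i) - Δ (y i) (t i) ≤ yh j - y j ∧
      yh j - y j ≤ ∑ i' ∈ (Finset.range j).filter (fun i' => chg i' = true),
        (Δ' (y i') (t i') - Δ (y i') (t i'))) := by
  have A : ∀ j, j ≤ n → 0 ≤ yh j - y j := by
    intro j
    induction j with
    | zero => intro _; simp [hy0, hyh0]
    | succ k ih =>
      intro hk
      have hkn : k < n := hk
      have ihk := ih (le_of_lt hkn)
      cases hck : chg k with
      | false =>
        rw [(hystep k hkn).2 hck, (hyhstep k hkn).2 hck]; linarith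
      | true =>
        rw [(hystep k hkn).1 hck, (hyhstep k hkn).1 hck]
        have hyk := (hrange k (le_of_lt hkn)).1
        have hyhk := (hrange k (le_of_lt hkn)).2
        have h1 : y k + Δ' (y k) (t k) ≤ yh k + Δ' (yh k) (t k) :=
          hmonoΔ' (t k) (ht k) hyk hyhk (by linarith)
        have h2 : 0 ≤ Δ' (y k) (t k) - Δ (y k) (t k) := heps _ hyk _ (ht k)
        linarith
  have D : ∀ i, i < n → chg i = false → yh (i+1) - y (i+1) = yh i - y i := by
    intro i hi hci
    rw [(hystep i hi).2 hci, (hyhstep i hi).2 hci]; ring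
  have C : ∀ i, i < n → chg i = true →
      Δ' (y i) (t i) - Δ (y i) (t i) ≤ yh (i+1) - y (i+1) := by
    intro i hi hci
    have hyk := (hrange i (le_of_lt hi)).1
    have hyhk := (hrange i (le_of_lt hi)).2
    have hA := A i (le_of_lt hi)
    have h1 : y i + Δ' (y i) (t i) ≤ yh i + Δ' (yh i) (t i) :=
      hmonoΔ' (t i) (ht i) hyk hyhk (by linarith)
    rw [(hystep i hi).1 hci, (hyhstep i hi).1 hci]
    linarith
  have B : ∀ j, j ≤ n → yh j - y j ≤
      ∑ i' ∈ (Finset.range j).filter (fun i' => chg i' = true),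
        (Δ' (y i') (t i') - Δ (y i') (t i')) := by
    intro j
    induction j with
    | zero => intro _; simp [hy0, hyh0]
    | succ k ih =>
      intro hk
      have hkn : k < n := hk
      have ihk := ih (le_of_lt hkn)
      rw [Finset.range_add_one, Finset.filter_insert]
      cases hck : chg k with
      | false =>
        rw [if_neg (by simp [hck])]
        rw [D k hkn hck]; exact ihk
      | true =>
        rw [if_pos rfl, Finset.sum_insert (by simp)]
        have hyk := (hrange k (le_of_lt hkn)).1
        have hyhk := (hrange k (le_of_lt hkn)).2
        have hA := A k (le_of_lt hkn)
        have hanti : Δ' (yh k) (t k) ≤ Δ' (y k) (t k) :=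
          hΔ'anti (t k) (ht k) hyk hyhk (by linarith)
        rw [(hystep k hkn).1 hck, (hyhstep k hkn).1 hck]
        linarith
  have E : ∀ j, ∀ i, i < j → j ≤ n → (∀ i', i < i' → i' < j → chg i' = false) →
      yh j - y j = yh (i+1) - y (i+1) := by
    intro j
    induction j with
    | zero => intro i hi; omega
    | succ k ih =>
      intro i hi hk hno
      rcases Nat.lt_or_ge i k with h | h
      · have hck : chg k = false := hno k (by omega) (by omega)
        rw [D k (by omega) hck]
        exact ih i h (by omega) (fun i' h1 h2 => hno i' h1 (by omega))
      · have : i = k := by omega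
        subst this; rfl
  refine ⟨?_, ?_⟩
  · intro j
    induction j with
    | zero => intro _ _; simp [hy0, hyh0]
    | succ k ih =>
      intro hk hno
      rw [D k hk (hno k (Nat.lt_succ_self k))]
      exact ih (le_of_lt hk) (fun i hi => hno i (by omega))
  · intro j hj i hi hci hno
    have hin : i < n := lt_of_lt_of_le hi hj
    refine ⟨heps _ (hrange i (le_of_lt hin)).1 _ (ht i), ?_, B j hj⟩
    rw [E j i hi hj hno]
    exact C i hin hci
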